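/- arXiv:2409.20265 — 5 statements merged into one kernel-verified Lean document; each statement's English description precedes it below -/
import Mathlib

section
/- Let n ≥ 1. For all z, w ∈ T_B one has 2|ρ(z,w)| ≥ max{ ρ(z), ρ(w) }. -/
open MeasureTheory Complex ComplexConjugate

noncomputable section

/-- The tube domain `T_B ⊆ ℂ^(n+1)` (paper dimension `n+1 ≥ 1`). -/
def TB (n : ℕ) : Set (Fin (n + 1) → ℂ) :=
  {z | ∑ k : Fin n, (z k.castSucc).im ^ 2 < (z (Fin.last n)).im}

/-- `ρ(z) = y_n − |y'|²`. -/
def rho (n : ℕ) (z : Fin (n + 1) → ℂ) : ℝ :=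
  (z (Fin.last n)).im - ∑ k : Fin n, (z k.castSucc).im ^ 2

/-- `ρ(z,w) = (1/4)(Σ (z_k − conj w_k)² − 2i(z_n − conj w_n))`. -/
def rho2 (n : ℕ) (z w : Fin (n + 1) → ℂ) : ℂ :=
  (1 / 4) * ((∑ k : Fin n, (z k.castSucc - conj (w k.castSucc)) ^ 2)
    - 2 * Complex.I * (z (Fin.last n) - conj (w (Fin.last n))))

/-- The point `𝐢 = (0,…,0,i) ∈ T_B`. -/
def iPt (n : ℕ) : Fin (n + 1) → ℂ := fun j => if j = Fin.last n then Complex.I else 0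

/-- `c_α = Γ(n+1+α)/(2^(n+1) πⁿ Γ(α+1))` (paper `n` = `n+1` here). -/
def cA (n : ℕ) (α : ℝ) : ℝ :=
  Real.Gamma ((n : ℝ) + 2 + α) / (2 ^ (n + 2) * Real.pi ^ (n + 1) * Real.Gamma (α + 1))

/-- Wirtinger derivative `∂g/∂z_j = (1/2)(∂g/∂x_j − i ∂g/∂y_j)`. -/
def wdz (n : ℕ) (j : Fin (n + 1)) (g : (Fin (n + 1) → ℂ) → ℂ) : (Fin (n + 1) → ℂ) → ℂ :=
  fun z => (1 / 2) * (fderiv ℝ g z (Pi.single j 1) - Complex.I * fderiv ℝ g z (Pi.single j Complex.I))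

/-- Wirtinger derivative `∂g/∂z̄_j = (1/2)(∂g/∂x_j + i ∂g/∂y_j)`. -/
def wdzbar (n : ℕ) (j : Fin (n + 1)) (g : (Fin (n + 1) → ℂ) → ℂ) : (Fin (n + 1) → ℂ) → ℂ :=
  fun z => (1 / 2) * (fderiv ℝ g z (Pi.single j 1) + Complex.I * fderiv ℝ g z (Pi.single j Complex.I))

lemma sq_re_aux (a b : ℂ) : ((a - conj b) ^ 2).re
    = (a.re - b.re) ^ 2 - (a.im + b.im) ^ 2 := by
  simp [pow_two, Complex.mul_re, Complex.sub_re, Complex.sub_im]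

theorem stmt9 (n : ℕ) (z w : Fin (n + 1) → ℂ) (hz : z ∈ TB n) (hw : w ∈ TB n) :
    max (rho n z) (rho n w) ≤ 2 * ‖rho2 n z w‖ := by
  have hre : (rho2 n z w).re = (1/4) * ((∑ k : Fin n,
      (((z k.castSucc).re - (w k.castSucc).re) ^ 2 - ((z k.castSucc).im + (w k.castSucc).im) ^ 2))
      + 2 * ((z (Fin.last n)).im + (w (Fin.last n)).im)) := by
    have hsum : (∑ k : Fin n, (z k.castSucc - conj (w k.castSucc)) ^ 2).re
        = ∑ k : Fin n, (((z k.castSucc).re - (w k.castSucc).re) ^ 2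
            - ((z k.castSucc).im + (w k.castSucc).im) ^ 2) := by
      rw [Complex.re_sum]
      exact Finset.sum_congr rfl fun k _ => sq_re_aux _ _
    simp [rho2, Complex.sub_re, Complex.mul_re, Complex.mul_im, Complex.sub_im, hsum]
  have hkey : rho n z + rho n w ≤ 2 * (rho2 n z w).re := by
    have hnn : (0:ℝ) ≤ ∑ k : Fin n, (((z k.castSucc).re - (w k.castSucc).re) ^ 2
        + ((z k.castSucc).im - (w k.castSucc).im) ^ 2) :=
      Finset.sum_nonneg fun k _ => by positivity
    have hsplit : ∑ k : Fin n, (((z k.castSucc).re - (w k.castSucc).re) ^ 2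
          - ((z k.castSucc).im + (w k.castSucc).im) ^ 2)
        = (∑ k : Fin n, (((z k.castSucc).re - (w k.castSucc).re) ^ 2
            + ((z k.castSucc).im - (w k.castSucc).im) ^ 2))
          - 2 * (∑ k : Fin n, (z k.castSucc).im ^ 2)
          - 2 * (∑ k : Fin n, (w k.castSucc).im ^ 2) := by
      rw [Finset.mul_sum, Finset.mul_sum, ← Finset.sum_sub_distrib, ← Finset.sum_sub_distrib]
      exact Finset.sum_congr rfl fun k _ => by ring
    rw [hre, rho, rho]
    nlinarith [hnn, hsplit]
  have hzpos : 0 < rho n z := by simpa [rho, sub_pos, TB] using hz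
  have hwpos : 0 < rho n w := by simpa [rho, sub_pos, TB] using hw
  have habs : (rho2 n z w).re ≤ ‖rho2 n z w‖ := Complex.re_le_norm _
  rw [max_le_iff]
  constructor <;> nlinarith
end
end

section
/- Let n ≥ 1 and let γ' = (γ'_1, …, γ'_{n−1}) ∈ ℕ₀^{n−1} be a multi-index. Then for all z, w ∈ T_B, |(z'−w')^{γ'}| ≤ 2^{|γ'|} |ρ(z,w)|^{|γ'|/2}, where (z'−w')^{γ'} = Π_{k=1}^{n−1} (z_k − w_k)^{γ'_k} and |γ'| = γ'_1 + ⋯ + γ'_{n−1}. -/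
open MeasureTheory Complex ComplexConjugate

noncomputable section

/-- The real part of `ρ(z,w)` decomposes as a sum of squares plus `(ρ(z)+ρ(w))/2`. -/
lemma rho2_re_eq (n : ℕ) (z w : Fin (n + 1) → ℂ) :
    (rho2 n z w).re = (∑ k : Fin n, Complex.normSq (z k.castSucc - w k.castSucc)) / 4
      + (rho n z + rho n w) / 2 := by
  simp only [rho2, rho, pow_two, Complex.mul_re, Complex.sub_re, Complex.sub_im, Complex.mul_im,
    Complex.I_re, Complex.I_im, Complex.re_sum, Complex.im_sum, Complex.normSq_apply,
    Complex.conj_re, Complex.conj_im, Complex.re_ofNat, Complex.im_ofNat, Complex.div_re,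
    Complex.one_re, Complex.one_im, Complex.normSq_ofNat, Complex.div_im]
  norm_num
  rw [Finset.sum_congr rfl (fun (x : Fin n) _ =>
    show ((z x.castSucc).im + (w x.castSucc).im) * ((z x.castSucc).im + (w x.castSucc).im)
      = -(((z x.castSucc).im - (w x.castSucc).im) * ((z x.castSucc).im - (w x.castSucc).im))
        + 2 * ((z x.castSucc).im * (z x.castSucc).im)
        + 2 * ((w x.castSucc).im * (w x.castSucc).im) by ring)]
  simp only [Finset.sum_add_distrib, Finset.sum_neg_distrib, ← Finset.mul_sum]
  linarith

theorem stmt10 (n : ℕ) (γ : Fin n → ℕ) (z w : Fin (n + 1) → ℂ)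
    (hz : z ∈ TB n) (hw : w ∈ TB n) :
    ‖∏ k : Fin n, (z k.castSucc - w k.castSucc) ^ γ k‖ ≤
      2 ^ (∑ k : Fin n, γ k)
        * ‖rho2 n z w‖ ^ (((∑ k : Fin n, γ k : ℕ) : ℝ) / 2) := by
  set R := ‖rho2 n z w‖ with hRdef
  have hR0 : 0 ≤ R := norm_nonneg _
  have hz' : 0 < rho n z := sub_pos.mpr hz
  have hw' : 0 < rho n w := sub_pos.mpr hw
  have hsum : ∑ k : Fin n, Complex.normSq (z k.castSucc - w k.castSucc) ≤ 4 * R := by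
    have h1 := Complex.re_le_norm (rho2 n z w)
    rw [rho2_re_eq] at h1
    linarith
  have key : ∀ k : Fin n,
      ‖z k.castSucc - w k.castSucc‖ ≤ 2 * R ^ ((1 : ℝ) / 2) := by
    intro k
    have h1 : Complex.normSq (z k.castSucc - w k.castSucc) ≤ 4 * R :=
      le_trans (Finset.single_le_sum
        (f := fun i : Fin n => Complex.normSq (z i.castSucc - w i.castSucc))
        (fun i _ => Complex.normSq_nonneg _) (Finset.mem_univ k)) hsum
    have h2 : ‖z k.castSucc - w k.castSucc‖
        = Real.sqrt (Complex.normSq (z k.castSucc - w k.castSucc)) := Complex.norm_def _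
    rw [h2]
    calc Real.sqrt (Complex.normSq (z k.castSucc - w k.castSucc))
        ≤ Real.sqrt (4 * R) := Real.sqrt_le_sqrt h1
      _ = 2 * R ^ ((1 : ℝ) / 2) := by
          rw [show (4 : ℝ) * R = 2 ^ 2 * R by ring, Real.sqrt_mul (by positivity),
            Real.sqrt_sq (by norm_num), Real.sqrt_eq_rpow]
  calc ‖∏ k : Fin n, (z k.castSucc - w k.castSucc) ^ γ k‖
      = ∏ k : Fin n, ‖z k.castSucc - w k.castSucc‖ ^ γ k := by
        simp [norm_prod, norm_pow]
    _ ≤ ∏ k : Fin n, (2 * R ^ ((1 : ℝ) / 2)) ^ γ k := by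
        apply Finset.prod_le_prod
        · intro i _; positivity
        · intro i _
          exact pow_le_pow_left₀ (norm_nonneg _) (key i) _
    _ = (2 * R ^ ((1 : ℝ) / 2)) ^ (∑ k : Fin n, γ k) := Finset.prod_pow_eq_pow_sum _ _ _
    _ = 2 ^ (∑ k : Fin n, γ k) * R ^ (((∑ k : Fin n, γ k : ℕ) : ℝ) / 2) := by
        rw [mul_pow, ← Real.rpow_natCast (R ^ ((1:ℝ)/2)), ← Real.rpow_mul hR0]
        ring_nf
end
end

section
/- Let n ≥ 1. For every u ∈ T_B and every s > 0, one has 4 Re ρ(u, (0,…,0,si)) ≥ Σ_{k=1}^{n−1} |u_k|² + 2s. Consequently, for all z, w ∈ T_B, |z' − w'|² ≤ 4|ρ(z,w)|, where |z'−w'|² = Σ_{k=1}^{n−1} |z_k − w_k|². -/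
open MeasureTheory Complex ComplexConjugate

noncomputable section

lemma re_rho2 (n : ℕ) (z w : Fin (n + 1) → ℂ) :
    4 * (rho2 n z w).re =
      (∑ k : Fin n, (((z k.castSucc).re - (w k.castSucc).re) ^ 2
        - ((z k.castSucc).im + (w k.castSucc).im) ^ 2))
      + 2 * ((z (Fin.last n)).im + (w (Fin.last n)).im) := by
  have h : (4 : ℂ) * rho2 n z w =
      (∑ k : Fin n, (z k.castSucc - conj (w k.castSucc)) ^ 2)
        - 2 * Complex.I * (z (Fin.last n) - conj (w (Fin.last n))) := by
    unfold rho2; ring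
  have h2 : 4 * (rho2 n z w).re = ((4 : ℂ) * rho2 n z w).re := by
    simp
  have hterm : ∀ k : Fin n, ((z k.castSucc - conj (w k.castSucc)) ^ 2).re =
      ((z k.castSucc).re - (w k.castSucc).re) ^ 2
        - ((z k.castSucc).im + (w k.castSucc).im) ^ 2 := by
    intro k
    simp only [sq, Complex.mul_re, Complex.sub_re, Complex.sub_im,
      Complex.conj_re, Complex.conj_im]
    ring
  rw [h2, h, Complex.sub_re, Complex.re_sum,
    Finset.sum_congr rfl (fun k _ => hterm k)]
  simp only [Complex.mul_re, Complex.mul_im, Complex.sub_im, Complex.sub_re,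
    Complex.I_re, Complex.I_im, Complex.conj_re, Complex.conj_im,
    Complex.re_ofNat, Complex.im_ofNat]
  ring

theorem stmt11 (n : ℕ) :
    (∀ u ∈ TB n, ∀ s : ℝ, 0 < s →
      (∑ k : Fin n, ‖u k.castSucc‖ ^ 2) + 2 * s ≤
        4 * (rho2 n u (fun j => if j = Fin.last n then (s : ℂ) * Complex.I else 0)).re) ∧
    ∀ z ∈ TB n, ∀ w ∈ TB n,
      (∑ k : Fin n, ‖z k.castSucc - w k.castSucc‖ ^ 2) ≤
        4 * ‖rho2 n z w‖ := by
  have habs : ∀ c : ℂ, ‖c‖ ^ 2 = c.re ^ 2 + c.im ^ 2 := by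
    intro c; rw [Complex.sq_norm, Complex.normSq_apply]; ring
  constructor
  · intro u hu s hs
    have hne : ∀ k : Fin n, k.castSucc ≠ Fin.last n := fun k => (Fin.castSucc_lt_last k).ne
    rw [re_rho2]
    simp only [if_pos rfl]
    have hTB : ∑ k : Fin n, (u k.castSucc).im ^ 2 < (u (Fin.last n)).im := hu
    have h1 : ∑ k : Fin n, ‖u k.castSucc‖ ^ 2 =
        ∑ k : Fin n, ((u k.castSucc).re ^ 2 + (u k.castSucc).im ^ 2) :=
      Finset.sum_congr rfl (fun k _ => habs _)
    have h2 : ∀ k : Fin n,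
        ((u k.castSucc).re - ((if k.castSucc = Fin.last n then (s : ℂ) * Complex.I else 0)).re) ^ 2
          - ((u k.castSucc).im + ((if k.castSucc = Fin.last n then (s : ℂ) * Complex.I else 0)).im) ^ 2
        = (u k.castSucc).re ^ 2 - (u k.castSucc).im ^ 2 := by
      intro k
      rw [if_neg (hne k)]
      simp
    rw [Finset.sum_congr rfl (fun k _ => h2 k), h1, Finset.sum_add_distrib,
      Finset.sum_sub_distrib]
    simp only [if_true, Complex.mul_im, Complex.ofReal_re, Complex.I_im,
      Complex.ofReal_im, Complex.I_re, mul_one, mul_zero, add_zero, zero_mul]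
    linarith
  · intro z hz w hw
    have hTBz : ∑ k : Fin n, (z k.castSucc).im ^ 2 < (z (Fin.last n)).im := hz
    have hTBw : ∑ k : Fin n, (w k.castSucc).im ^ 2 < (w (Fin.last n)).im := hw
    have hre := Complex.re_le_norm (rho2 n z w)
    have key : (∑ k : Fin n, ‖z k.castSucc - w k.castSucc‖ ^ 2) =
        (∑ k : Fin n, (((z k.castSucc).re - (w k.castSucc).re) ^ 2
          - ((z k.castSucc).im + (w k.castSucc).im) ^ 2))
        + 2 * (∑ k : Fin n, (z k.castSucc).im ^ 2)
        + 2 * (∑ k : Fin n, (w k.castSucc).im ^ 2) := by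
      rw [Finset.mul_sum, Finset.mul_sum, ← Finset.sum_add_distrib, ← Finset.sum_add_distrib]
      refine Finset.sum_congr rfl (fun k _ => ?_)
      rw [habs, Complex.sub_re, Complex.sub_im]
      ring
    have h4 := re_rho2 n z w
    nlinarith [key, h4, hre]
end
end

section
/- Let n ≥ 1 and let g : T_B → ℂ be twice continuously differentiable (as a function of the underlying real variables). Then (Δ̃g)(𝐢) = 4 Σ_{j=1}^{n} ∂²(g∘Φ)/∂z_j∂z̄_j (0), where Δ̃g(z) = 8ρ(z)[ Σ_{j=1}^{n−1} ∂²g/∂z_j∂z̄_j(z) + Σ_{j=1}^{n−1} 2y_j ∂²g/∂z_n∂z̄_j(z) + Σ_{j=1}^{n−1} 2y_j ∂²g/∂z̄_n∂z_j(z) + 2(y_n + |y'|²) ∂²g/∂z̄_n∂z_n(z) ]. -/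
open MeasureTheory Complex ComplexConjugate

noncomputable section

/-- The invariant Laplacian `Δ̃` on `T_B`. -/
def invLap (n : ℕ) (g : (Fin (n + 1) → ℂ) → ℂ) (z : Fin (n + 1) → ℂ) : ℂ :=
  8 * ((rho n z : ℝ) : ℂ) *
    ((∑ j : Fin n, wdz n j.castSucc (wdzbar n j.castSucc g) z)
      + (∑ j : Fin n, 2 * ((z j.castSucc).im : ℂ) * wdz n (Fin.last n) (wdzbar n j.castSucc g) z)
      + (∑ j : Fin n, 2 * ((z j.castSucc).im : ℂ) * wdzbar n (Fin.last n) (wdz n j.castSucc g) z)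
      + 2 * ((((z (Fin.last n)).im + ∑ j : Fin n, (z j.castSucc).im ^ 2 : ℝ)) : ℂ)
          * wdzbar n (Fin.last n) (wdz n (Fin.last n) g) z)

/-- The Cayley transform `Φ : 𝔹 → T_B`. -/
def Phi (n : ℕ) (ξ : Fin (n + 1) → ℂ) : Fin (n + 1) → ℂ := fun j =>
  if j = Fin.last n then
    Complex.I * (1 - ξ (Fin.last n)) / (1 + ξ (Fin.last n))
      - Complex.I * (∑ k : Fin n, ξ k.castSucc ^ 2) / (1 + ξ (Fin.last n)) ^ 2
  else ((Real.sqrt 2 : ℝ) : ℂ) * ξ j / (1 + ξ (Fin.last n))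

namespace S16

abbrev E (n : ℕ) := Fin (n + 1) → ℂ

lemma isOpen_TB (n : ℕ) : IsOpen (TB n) := by
  apply isOpen_lt (f := fun z : E n => ∑ k : Fin n, (z k.castSucc).im ^ 2)
    (g := fun z : E n => (z (Fin.last n)).im)
  · exact continuous_finset_sum _ fun k _ =>
      ((Complex.continuous_im.comp (continuous_apply _)).pow 2)
  · exact Complex.continuous_im.comp (continuous_apply _)

lemma iPt_mem_TB (n : ℕ) : iPt n ∈ TB n := by
  simp only [TB, iPt, Set.mem_setOf_eq]
  have h : ∀ k : Fin n, ((if k.castSucc = Fin.last n then Complex.I else 0).im) ^ 2 = 0 := by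
    intro k
    rw [if_neg (Fin.castSucc_lt_last k).ne]
    simp
  rw [Finset.sum_congr rfl fun k _ => h k]
  simp

lemma Phi_zero (n : ℕ) : Phi n 0 = iPt n := by
  funext j
  simp only [Phi, iPt]
  by_cases h : j = Fin.last n <;> simp [h]

lemma contDiffAt_Phi {n : ℕ} {ξ : E n} (hξ : 1 + ξ (Fin.last n) ≠ 0) :
    ContDiffAt ℂ 2 (Phi n) ξ := by
  rw [contDiffAt_pi]
  intro a
  have hproj : ∀ b : Fin (n + 1), ContDiffAt ℂ 2 (fun z : E n => z b) ξ := fun b =>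
    (ContinuousLinearMap.proj (R := ℂ) (φ := fun _ : Fin (n+1) => ℂ) b).contDiff.contDiffAt
  have hden : ContDiffAt ℂ 2 (fun z : E n => 1 + z (Fin.last n)) ξ :=
    contDiffAt_const.add (hproj _)
  by_cases h : a = Fin.last n
  · subst h
    simp only [Phi, if_pos rfl]
    exact ((contDiffAt_const.mul (contDiffAt_const.sub (hproj _))).div hden hξ).sub
      ((contDiffAt_const.mul (ContDiffAt.sum fun k _ => (hproj _).pow 2)).div
        (hden.pow 2) (pow_ne_zero 2 hξ))
  · simp only [Phi, if_neg h]
    exact (contDiffAt_const.mul (hproj _)).div hden hξ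

end S16

set_option synthInstance.maxHeartbeats 1000000
namespace S16

def cc (n : ℕ) (a : Fin (n + 1)) : ℂ :=
  if a = Fin.last n then (-2) * Complex.I else ((Real.sqrt 2 : ℝ) : ℂ)

abbrev pj (n : ℕ) (a : Fin (n + 1)) : E n →L[ℂ] ℂ := ContinuousLinearMap.proj a

def L0 (n : ℕ) : E n →L[ℂ] E n :=
  ContinuousLinearMap.pi fun a => cc n a • pj n a

lemma hasFDerivAt_Phi (n : ℕ) : HasFDerivAt (Phi n) (L0 n) (0 : E n) := by
  apply hasFDerivAt_pi''
  intro a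
  have hcomp : (pj n a).comp (L0 n)
      = cc n a • pj n a := by
    ext v
    simp [L0]
  rw [hcomp]
  have hw : HasFDerivAt (fun z : E n => 1 + z (Fin.last n))
      (pj n (Fin.last n)) 0 :=
    ((pj n (Fin.last n)).hasFDerivAt (x := 0)).const_add (1 : ℂ)
  have hw0 : (1 : ℂ) + (0 : E n) (Fin.last n) = 1 := by simp
  have hv : HasFDerivAt (fun z : E n => (1 + z (Fin.last n))⁻¹)
      ((-((1:ℂ)^2)⁻¹) • pj n (Fin.last n)) 0 := by
    have hinv : HasDerivAt (fun y : ℂ => y⁻¹) (-((1:ℂ)^2)⁻¹) ((fun z : E n => 1 + z (Fin.last n)) 0) := by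
      rw [show (fun z : E n => 1 + z (Fin.last n)) 0 = 1 by simp]
      exact hasDerivAt_inv one_ne_zero
    have h := hinv.comp_hasFDerivAt (x := (0 : E n)) hw
    exact h
  by_cases h : a = Fin.last n
  · subst h
    have hfun : (fun z : E n => Phi n z (Fin.last n))
        = fun z : E n => (Complex.I * (1 - z (Fin.last n))) * (1 + z (Fin.last n))⁻¹
          - (Complex.I * ∑ k : Fin n, z k.castSucc ^ 2) * ((1 + z (Fin.last n)) ^ 2)⁻¹ := by
      funext z
      simp only [Phi, if_pos rfl, div_eq_mul_inv, if_true, eq_self_iff_true]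
    rw [hfun]
    have h1 : HasFDerivAt (fun z : E n => Complex.I * (1 - z (Fin.last n)))
        (Complex.I • (-(pj n (Fin.last n)))) 0 :=
      (((pj n (Fin.last n)).hasFDerivAt (x := 0)).const_sub (1 : ℂ)).const_mul Complex.I
    have hSk : ∀ k : Fin n, HasFDerivAt (fun z : E n => z k.castSucc ^ 2)
        (0 : E n →L[ℂ] ℂ) 0 := by
      intro k
      have h := ((pj n k.castSucc).hasFDerivAt (x := (0:E n))).fun_mul
        ((pj n k.castSucc).hasFDerivAt (x := (0:E n)))
      have hfn : (fun z : E n => z k.castSucc ^ 2)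
          = fun z : E n => z k.castSucc * z k.castSucc := by funext z; ring
      rw [hfn]
      convert! h using 1
      ext v
      simp
    have hS : HasFDerivAt (fun z : E n => ∑ k : Fin n, z k.castSucc ^ 2)
        (0 : E n →L[ℂ] ℂ) 0 := by
      have h := HasFDerivAt.fun_sum (fun k (_ : k ∈ Finset.univ) => hSk k)
      convert! h using 1
      simp
    have hS' : HasFDerivAt (fun z : E n => Complex.I * ∑ k : Fin n, z k.castSucc ^ 2)
        (Complex.I • (0 : E n →L[ℂ] ℂ)) 0 := hS.const_mul Complex.I
    have hv2 : HasFDerivAt (fun z : E n => ((1 + z (Fin.last n)) ^ 2)⁻¹)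
        ((-(((1:ℂ)^2)^2)⁻¹) • ((2:ℂ) • pj n (Fin.last n))) 0 := by
      have hp : HasFDerivAt (fun z : E n => (1 + z (Fin.last n)) ^ 2)
          ((2:ℂ) • pj n (Fin.last n)) 0 := by
        have h := hw.fun_mul hw
        have hfn : (fun z : E n => (1 + z (Fin.last n)) ^ 2)
            = fun z : E n => (1 + z (Fin.last n)) * (1 + z (Fin.last n)) := by funext z; ring
        rw [hfn]
        convert! h using 1
        ext v
        simp [two_mul]
      have hinv : HasDerivAt (fun y : ℂ => y⁻¹) (-(((1:ℂ)^2)^2)⁻¹) ((fun z : E n => (1 + z (Fin.last n)) ^ 2) 0) := by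
        rw [show (fun z : E n => (1 + z (Fin.last n)) ^ 2) 0 = (1:ℂ)^2 by simp]
        exact hasDerivAt_inv (by norm_num)
      have h := hinv.comp_hasFDerivAt (x := (0 : E n)) hp
      exact h
    have := (h1.fun_mul hv).fun_sub (hS'.fun_mul hv2)
    convert! this using 1
    ext v
    simp [cc]
    ring
  · have hfun : (fun z : E n => Phi n z a)
        = fun z : E n => (((Real.sqrt 2 : ℝ) : ℂ) * z a) * (1 + z (Fin.last n))⁻¹ := by
      funext z
      simp only [Phi, if_neg h, div_eq_mul_inv]
    rw [hfun]
    have h1 : HasFDerivAt (fun z : E n => ((Real.sqrt 2 : ℝ) : ℂ) * z a)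
        (((Real.sqrt 2 : ℝ) : ℂ) • pj n a) 0 :=
      ((pj n a).hasFDerivAt (x := 0)).const_mul _
    have := h1.fun_mul hv
    convert! this using 1
    ext v
    simp [cc, h]

end S16

namespace S16

variable {n : ℕ}

lemma fderiv_fderiv_apply {h : E n → ℂ} {x : E n} (hd : DifferentiableAt ℝ (fderiv ℝ h) x)
    (u w : E n) :
    fderiv ℝ (fun z => fderiv ℝ h z u) x w = fderiv ℝ (fderiv ℝ h) x w u := by
  have h1 : fderiv ℝ (fun z => (fderiv ℝ h z) u) x
      = (fderiv ℝ h x).comp (fderiv ℝ (fun _ : E n => u) x) + (fderiv ℝ (fderiv ℝ h) x).flip u :=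
    fderiv_clm_apply hd (differentiableAt_const u)
  rw [h1]
  simp

lemma expandP {h : E n → ℂ} {x : E n} (hh : ContDiffAt ℝ 2 h x) (u1 u2 w : E n) :
    fderiv ℝ (fun z => (1 / 2 : ℂ) * (fderiv ℝ h z u1 + Complex.I * fderiv ℝ h z u2)) x w
      = (1 / 2 : ℂ) * (fderiv ℝ (fderiv ℝ h) x w u1
          + Complex.I * fderiv ℝ (fderiv ℝ h) x w u2) := by
  have hd : DifferentiableAt ℝ (fderiv ℝ h) x :=
    (hh.fderiv_right (m := 1) (by norm_num)).differentiableAt (by norm_num)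
  have hp : ∀ u : E n, DifferentiableAt ℝ (fun z => fderiv ℝ h z u) x := fun u =>
    hd.clm_apply (differentiableAt_const u)
  rw [fderiv_const_mul ((hp u1).fun_add ((hp u2).const_mul Complex.I)),
    fderiv_fun_add (hp u1) ((hp u2).const_mul Complex.I), fderiv_const_mul (hp u2)]
  simp [fderiv_fderiv_apply hd]
  ring

lemma expandM {h : E n → ℂ} {x : E n} (hh : ContDiffAt ℝ 2 h x) (u1 u2 w : E n) :
    fderiv ℝ (fun z => (1 / 2 : ℂ) * (fderiv ℝ h z u1 - Complex.I * fderiv ℝ h z u2)) x w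
      = (1 / 2 : ℂ) * (fderiv ℝ (fderiv ℝ h) x w u1
          - Complex.I * fderiv ℝ (fderiv ℝ h) x w u2) := by
  have hd : DifferentiableAt ℝ (fderiv ℝ h) x :=
    (hh.fderiv_right (m := 1) (by norm_num)).differentiableAt (by norm_num)
  have hp : ∀ u : E n, DifferentiableAt ℝ (fun z => fderiv ℝ h z u) x := fun u =>
    hd.clm_apply (differentiableAt_const u)
  rw [fderiv_const_mul ((hp u1).fun_sub ((hp u2).const_mul Complex.I)),
    fderiv_fun_sub (hp u1) ((hp u2).const_mul Complex.I), fderiv_const_mul (hp u2)]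
  simp [fderiv_fderiv_apply hd]

lemma wdz_wdzbar_expand {h : E n → ℂ} {x : E n} (hh : ContDiffAt ℝ 2 h x) (j k : Fin (n + 1)) :
    wdz n k (wdzbar n j h) x = (1 / 4 : ℂ) *
      (fderiv ℝ (fderiv ℝ h) x (Pi.single k 1) (Pi.single j 1)
        + Complex.I * fderiv ℝ (fderiv ℝ h) x (Pi.single k 1) (Pi.single j Complex.I)
        - Complex.I * fderiv ℝ (fderiv ℝ h) x (Pi.single k Complex.I) (Pi.single j 1)
        + fderiv ℝ (fderiv ℝ h) x (Pi.single k Complex.I) (Pi.single j Complex.I)) := by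
  have hfn : wdzbar n j h = fun z => (1 / 2 : ℂ) * (fderiv ℝ h z (Pi.single j 1)
      + Complex.I * fderiv ℝ h z (Pi.single j Complex.I)) := rfl
  simp only [wdz, hfn]
  rw [expandP hh, expandP hh]
  ring_nf
  rw [Complex.I_sq]
  ring

lemma wdzbar_wdz_expand {h : E n → ℂ} {x : E n} (hh : ContDiffAt ℝ 2 h x) (j k : Fin (n + 1)) :
    wdzbar n k (wdz n j h) x = (1 / 4 : ℂ) *
      (fderiv ℝ (fderiv ℝ h) x (Pi.single k 1) (Pi.single j 1)
        - Complex.I * fderiv ℝ (fderiv ℝ h) x (Pi.single k 1) (Pi.single j Complex.I)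
        + Complex.I * fderiv ℝ (fderiv ℝ h) x (Pi.single k Complex.I) (Pi.single j 1)
        + fderiv ℝ (fderiv ℝ h) x (Pi.single k Complex.I) (Pi.single j Complex.I)) := by
  have hfn : wdz n j h = fun z => (1 / 2 : ℂ) * (fderiv ℝ h z (Pi.single j 1)
      - Complex.I * fderiv ℝ h z (Pi.single j Complex.I)) := rfl
  simp only [wdzbar, hfn]
  rw [expandM hh, expandM hh]
  ring_nf
  rw [Complex.I_sq]
  ring

end S16

namespace S16

lemma smul_single {n : ℕ} (j : Fin (n + 1)) (c x : ℂ) :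
    c • (Pi.single j x : E n) = Pi.single j (c * x) := by
  funext a
  rcases eq_or_ne a j with h | h
  · subst h; simp
  · simp [Pi.single_eq_of_ne h]

lemma rsmul_single {n : ℕ} (j : Fin (n + 1)) (r : ℝ) (x : ℂ) :
    r • (Pi.single j x : E n) = Pi.single j ((r : ℂ) * x) := by
  funext a
  rcases eq_or_ne a j with h | h
  · subst h; simp [Complex.real_smul]
  · simp [Pi.single_eq_of_ne h]

lemma single_I {n : ℕ} (j : Fin (n + 1)) :
    (Pi.single j Complex.I : E n) = Complex.I • (Pi.single j 1 : E n) := by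
  rw [smul_single, mul_one]

lemma ev_ne (n : ℕ) : ∀ᶠ ξ : E n in nhds 0, 1 + ξ (Fin.last n) ≠ 0 := by
  have hc : ContinuousAt (fun ξ : E n => 1 + ξ (Fin.last n)) 0 :=
    (continuous_const.add (continuous_apply _)).continuousAt
  exact hc.eventually_ne (by simp)

lemma ev_diffC (n : ℕ) : ∀ᶠ ξ : E n in nhds 0, DifferentiableAt ℂ (Phi n) ξ :=
  (ev_ne n).mono fun ξ h => (contDiffAt_Phi h).differentiableAt two_ne_zero

end S16


theorem stmt16 (n : ℕ) (g : (Fin (n + 1) → ℂ) → ℂ) (hg : ContDiffOn ℝ 2 g (TB n)) :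
    invLap n g (iPt n) = 4 * ∑ j : Fin (n + 1), wdz n j (wdzbar n j (g ∘ Phi n)) 0 := by
  classical
  have hTBo := S16.isOpen_TB n
  have hiPt := S16.iPt_mem_TB n
  have hg2 : ContDiffAt ℝ 2 g (iPt n) := hg.contDiffAt (hTBo.mem_nhds hiPt)
  have h0ne : (1 : ℂ) + (0 : S16.E n) (Fin.last n) ≠ 0 := by simp
  have hPhiC : ContDiffAt ℂ 2 (Phi n) 0 := S16.contDiffAt_Phi h0ne
  have hPhiR : ContDiffAt ℝ 2 (Phi n) 0 := hPhiC.restrict_scalars ℝ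
  have hgPhi0 : ContDiffAt ℝ 2 g (Phi n 0) := by rw [S16.Phi_zero]; exact hg2
  have hf2 : ContDiffAt ℝ 2 (g ∘ Phi n) 0 := hgPhi0.comp 0 hPhiR
  set B := fderiv ℝ (fderiv ℝ g) (iPt n) with hBdef
  set A := fderiv ℝ g (iPt n) with hAdef
  set L : S16.E n →L[ℝ] S16.E n := (S16.L0 n).restrictScalars ℝ with hLdef
  have hL : fderiv ℝ (Phi n) 0 = L := ((S16.hasFDerivAt_Phi n).restrictScalars ℝ).fderiv
  -- eventual facts
  have hPhiDiffC := S16.ev_diffC n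
  have hPhiDiffR : ∀ᶠ ξ : S16.E n in nhds 0, DifferentiableAt ℝ (Phi n) ξ :=
    hPhiDiffC.mono fun ξ h => h.restrictScalars ℝ
  have hPhimem : ∀ᶠ ξ : S16.E n in nhds 0, Phi n ξ ∈ TB n := by
    have hc : ContinuousAt (Phi n) 0 := hPhiR.continuousAt
    exact hc.preimage_mem_nhds (hTBo.mem_nhds (by rw [S16.Phi_zero]; exact hiPt))
  have hgdiff : ∀ᶠ ξ : S16.E n in nhds 0, DifferentiableAt ℝ g (Phi n ξ) :=
    hPhimem.mono fun ξ hξ =>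
      (hg.contDiffAt (hTBo.mem_nhds hξ)).differentiableAt two_ne_zero
  have hchain : ∀ᶠ ξ : S16.E n in nhds 0,
      fderiv ℝ (g ∘ Phi n) ξ = (fderiv ℝ g (Phi n ξ)).comp (fderiv ℝ (Phi n) ξ) := by
    filter_upwards [hgdiff, hPhiDiffR] with ξ h1 h2
    exact fderiv_comp ξ h1 h2
  have hrestr : ∀ᶠ ξ : S16.E n in nhds 0,
      fderiv ℝ (Phi n) ξ = (fderiv ℂ (Phi n) ξ).restrictScalars ℝ :=
    hPhiDiffC.mono fun ξ h => h.fderiv_restrictScalars ℝ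
  -- Q facts
  have hdPhiC1 : ContDiffAt ℂ 1 (fderiv ℂ (Phi n)) 0 := hPhiC.fderiv_right (by norm_num)
  have hFvC : ∀ v : S16.E n, DifferentiableAt ℂ (fun ξ => fderiv ℂ (Phi n) ξ v) 0 := fun v =>
    (hdPhiC1.differentiableAt one_ne_zero).clm_apply (differentiableAt_const v)
  have hevQ : ∀ v : S16.E n, (fun ξ => fderiv ℝ (Phi n) ξ v)
      =ᶠ[nhds (0 : S16.E n)] (fun ξ => fderiv ℂ (Phi n) ξ v) :=
    fun v => hrestr.mono fun ξ h => by
      show fderiv ℝ (Phi n) ξ v = fderiv ℂ (Phi n) ξ v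
      rw [h]; rfl
  have hQdiff : ∀ v : S16.E n, DifferentiableAt ℝ (fun ξ => fderiv ℝ (Phi n) ξ v) 0 := fun v =>
    ((hevQ v).differentiableAt_iff).mpr ((hFvC v).restrictScalars ℝ)
  have hq_w : ∀ v w : S16.E n,
      fderiv ℝ (fun ξ => fderiv ℝ (Phi n) ξ v) 0 (Complex.I • w)
        = Complex.I • fderiv ℝ (fun ξ => fderiv ℝ (Phi n) ξ v) 0 w := by
    intro v w
    have h1 : fderiv ℝ (fun ξ => fderiv ℝ (Phi n) ξ v) 0
        = (fderiv ℂ (fun ξ => fderiv ℂ (Phi n) ξ v) 0).restrictScalars ℝ := by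
      rw [(hevQ v).fderiv_eq]
      exact (hFvC v).fderiv_restrictScalars ℝ
    rw [h1]
    simp
  have hq_v : ∀ v w : S16.E n,
      fderiv ℝ (fun ξ => fderiv ℝ (Phi n) ξ (Complex.I • v)) 0 w
        = Complex.I • fderiv ℝ (fun ξ => fderiv ℝ (Phi n) ξ v) 0 w := by
    intro v w
    have hev2 : (fun ξ => fderiv ℝ (Phi n) ξ (Complex.I • v))
        =ᶠ[nhds (0 : S16.E n)] (fun ξ => Complex.I • fderiv ℝ (Phi n) ξ v) := by
      filter_upwards [hrestr] with ξ h
      show fderiv ℝ (Phi n) ξ (Complex.I • v) = Complex.I • fderiv ℝ (Phi n) ξ v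
      rw [h]
      simp
    rw [hev2.fderiv_eq, fderiv_fun_const_smul (hQdiff v) Complex.I]
    rfl
  have hqs_v : ∀ (j : Fin (n + 1)) (w : S16.E n),
      fderiv ℝ (fun ξ => fderiv ℝ (Phi n) ξ (Pi.single j Complex.I)) 0 w
        = Complex.I • fderiv ℝ (fun ξ => fderiv ℝ (Phi n) ξ (Pi.single j 1)) 0 w := by
    intro j w
    rw [S16.single_I j]
    exact hq_v _ _
  have hqs_w : ∀ (j : Fin (n + 1)) (v : S16.E n),
      fderiv ℝ (fun ξ => fderiv ℝ (Phi n) ξ v) 0 (Pi.single j Complex.I)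
        = Complex.I • fderiv ℝ (fun ξ => fderiv ℝ (Phi n) ξ v) 0 (Pi.single j 1) := by
    intro j v
    rw [S16.single_I j]
    exact hq_w _ _
  -- the key chain-rule identity for the second derivative
  have hdg' : DifferentiableAt ℝ (fderiv ℝ g) (iPt n) :=
    (hg2.fderiv_right (m := 1) (by norm_num)).differentiableAt (by norm_num)
  have hPhidR0 : DifferentiableAt ℝ (Phi n) 0 := hPhiR.differentiableAt two_ne_zero
  have hcPhi : DifferentiableAt ℝ (fun ξ => fderiv ℝ g (Phi n ξ)) 0 := by
    have h1 : DifferentiableAt ℝ (fderiv ℝ g) (Phi n 0) := by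
      rw [S16.Phi_zero]; exact hdg'
    exact h1.comp 0 hPhidR0
  have hcPhi_fderiv : fderiv ℝ (fun ξ => fderiv ℝ g (Phi n ξ)) 0 = B.comp L := by
    have h1 : DifferentiableAt ℝ (fderiv ℝ g) (Phi n 0) := by
      rw [S16.Phi_zero]; exact hdg'
    have h := fderiv_comp' (0 : S16.E n) h1 hPhidR0
    rw [S16.Phi_zero, hL] at h
    exact h
  have hkey : ∀ w v : S16.E n,
      fderiv ℝ (fderiv ℝ (g ∘ Phi n)) (0 : S16.E n) w v
        = B (L w) (L v) + A (fderiv ℝ (fun ξ => fderiv ℝ (Phi n) ξ v) 0 w) := by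
    intro w v
    have hBfd : DifferentiableAt ℝ (fderiv ℝ (g ∘ Phi n)) 0 :=
      (hf2.fderiv_right (m := 1) (by norm_num)).differentiableAt (by norm_num)
    rw [← S16.fderiv_fderiv_apply hBfd v w]
    have hev : (fun ξ => fderiv ℝ (g ∘ Phi n) ξ v)
        =ᶠ[nhds (0 : S16.E n)] (fun ξ => (fderiv ℝ g (Phi n ξ)) (fderiv ℝ (Phi n) ξ v)) := by
      filter_upwards [hchain] with ξ h
      show fderiv ℝ (g ∘ Phi n) ξ v = (fderiv ℝ g (Phi n ξ)) (fderiv ℝ (Phi n) ξ v)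
      rw [h]
      rfl
    rw [hev.fderiv_eq, fderiv_clm_apply hcPhi (hQdiff v), hcPhi_fderiv]
    simp only [ContinuousLinearMap.add_apply, ContinuousLinearMap.coe_comp', Function.comp_apply,
      ContinuousLinearMap.flip_apply]
    rw [S16.Phi_zero, hL]
    ring
  -- values of L on basis singles
  have hLs : ∀ (j : Fin (n + 1)) (x : ℂ), L (Pi.single j x) = Pi.single j (S16.cc n j * x) := by
    intro j x
    funext a
    show (S16.L0 n) (Pi.single j x) a = _
    rw [S16.L0]
    simp only [ContinuousLinearMap.pi_apply, ContinuousLinearMap.smul_apply,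
      ContinuousLinearMap.proj_apply, smul_eq_mul]
    rcases eq_or_ne a j with h | h
    · subst h; simp
    · simp [Pi.single_eq_of_ne h, Pi.single_eq_of_ne h]
  have hccc : ∀ j : Fin n, S16.cc n j.castSucc = ((Real.sqrt 2 : ℝ) : ℂ) := fun j => by
    rw [S16.cc, if_neg (Fin.castSucc_lt_last j).ne]
  have hL1 : ∀ j : Fin n, L (Pi.single j.castSucc (1 : ℂ))
      = (Real.sqrt 2 : ℝ) • (Pi.single j.castSucc (1 : ℂ) : S16.E n) := by
    intro j
    rw [hLs, hccc j, S16.rsmul_single]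
  have hL2 : ∀ j : Fin n, L (Pi.single j.castSucc Complex.I)
      = (Real.sqrt 2 : ℝ) • (Pi.single j.castSucc Complex.I : S16.E n) := by
    intro j
    rw [hLs, hccc j, S16.rsmul_single]
  have hccl : S16.cc n (Fin.last n) = (-2) * Complex.I := if_pos rfl
  have hL3 : L (Pi.single (Fin.last n) (1 : ℂ))
      = (-2 : ℝ) • (Pi.single (Fin.last n) Complex.I : S16.E n) := by
    rw [hLs, hccl, S16.rsmul_single]
    exact congrArg _ (by push_cast; ring)
  have hL4 : L (Pi.single (Fin.last n) Complex.I)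
      = (2 : ℝ) • (Pi.single (Fin.last n) (1 : ℂ) : S16.E n) := by
    rw [hLs, hccl, S16.rsmul_single]
    refine congrArg _ ?_
    rw [mul_assoc, Complex.I_mul_I]
    push_cast
    ring
  -- I • I • q = -q
  have hII : ∀ q : S16.E n, Complex.I • Complex.I • q = -q := by
    intro q
    rw [smul_smul, Complex.I_mul_I, neg_one_smul]
  -- real smul through B
  have hBs : ∀ (r s : ℝ) (x y : S16.E n), B (r • x) (s • y) = ((r : ℂ) * (s : ℂ)) * B x y := by
    intro r s x y
    have h1 : B (r • x) = r • B x := _root_.map_smul B r x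
    rw [h1, ContinuousLinearMap.smul_apply, (B x).map_smul]
    simp only [smul_eq_mul, Complex.real_smul]
    push_cast
    ring
  have hsqrt2 : ((Real.sqrt 2 : ℝ) : ℂ) * ((Real.sqrt 2 : ℝ) : ℂ) = 2 := by
    rw [← Complex.ofReal_mul, Real.mul_self_sqrt (by norm_num)]
    norm_num
  -- per-index identities
  have hTfc : ∀ j : Fin n, wdz n j.castSucc (wdzbar n j.castSucc (g ∘ Phi n)) 0
      = 2 * wdz n j.castSucc (wdzbar n j.castSucc g) (iPt n) := by
    intro j
    rw [S16.wdz_wdzbar_expand hf2 j.castSucc j.castSucc,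
      S16.wdz_wdzbar_expand hg2 j.castSucc j.castSucc]
    rw [hkey, hkey, hkey, hkey, hL1 j, hL2 j]
    rw [hqs_v j.castSucc, hqs_w j.castSucc, hqs_v j.castSucc, hqs_w j.castSucc]
    rw [hII, map_neg, hBs, hBs, hBs, hBs, hsqrt2]
    ring
  have hTfl : wdz n (Fin.last n) (wdzbar n (Fin.last n) (g ∘ Phi n)) 0
      = 4 * wdz n (Fin.last n) (wdzbar n (Fin.last n) g) (iPt n) := by
    rw [S16.wdz_wdzbar_expand hf2 (Fin.last n) (Fin.last n),
      S16.wdz_wdzbar_expand hg2 (Fin.last n) (Fin.last n)]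
    rw [hkey, hkey, hkey, hkey, hL3, hL4]
    rw [hqs_v (Fin.last n), hqs_w (Fin.last n), hqs_v (Fin.last n), hqs_w (Fin.last n)]
    rw [hII, map_neg, hBs, hBs, hBs, hBs]
    push_cast
    ring
  -- symmetry of second derivative of g
  have hsym : B (Pi.single (Fin.last n) (1 : ℂ)) (Pi.single (Fin.last n) Complex.I)
      = B (Pi.single (Fin.last n) Complex.I) (Pi.single (Fin.last n) (1 : ℂ)) :=
    (hg2.isSymmSndFDerivAt (by norm_num)) _ _
  have hbar : wdzbar n (Fin.last n) (wdz n (Fin.last n) g) (iPt n)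
      = wdz n (Fin.last n) (wdzbar n (Fin.last n) g) (iPt n) := by
    rw [S16.wdzbar_wdz_expand hg2 (Fin.last n) (Fin.last n),
      S16.wdz_wdzbar_expand hg2 (Fin.last n) (Fin.last n), hsym]
    ring
  -- now assemble
  have him : ∀ j : Fin n, ((iPt n j.castSucc).im : ℂ) = 0 := by
    intro j
    rw [iPt]
    simp [(Fin.castSucc_lt_last j).ne]
  have hrho : rho n (iPt n) = 1 := by
    rw [rho]
    have h1 : ∀ j : Fin n, (iPt n j.castSucc).im ^ 2 = 0 := by
      intro j
      rw [iPt]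
      simp [(Fin.castSucc_lt_last j).ne]
    rw [Finset.sum_congr rfl fun j _ => h1 j]
    rw [iPt]
    simp
  have hcoef : ((iPt n (Fin.last n)).im + ∑ j : Fin n, (iPt n j.castSucc).im ^ 2 : ℝ) = 1 := by
    have h1 : ∀ j : Fin n, (iPt n j.castSucc).im ^ 2 = 0 := by
      intro j
      rw [iPt]
      simp [(Fin.castSucc_lt_last j).ne]
    rw [Finset.sum_congr rfl fun j _ => h1 j]
    rw [iPt]
    simp
  have hsum0a : (∑ j : Fin n, 2 * ((iPt n j.castSucc).im : ℂ)
      * wdz n (Fin.last n) (wdzbar n j.castSucc g) (iPt n)) = 0 := by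
    apply Finset.sum_eq_zero
    intro j _
    rw [him j]
    ring
  have hsum0b : (∑ j : Fin n, 2 * ((iPt n j.castSucc).im : ℂ)
      * wdzbar n (Fin.last n) (wdz n j.castSucc g) (iPt n)) = 0 := by
    apply Finset.sum_eq_zero
    intro j _
    rw [him j]
    ring
  have hsumf : (∑ j : Fin n, wdz n j.castSucc (wdzbar n j.castSucc (g ∘ Phi n)) 0)
      = ∑ j : Fin n, 2 * wdz n j.castSucc (wdzbar n j.castSucc g) (iPt n) :=
    Finset.sum_congr rfl fun j _ => hTfc j
  rw [invLap, hrho, hcoef, hbar, hsum0a, hsum0b]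
  rw [Fin.sum_univ_castSucc (f := fun j => wdz n j (wdzbar n j (g ∘ Phi n)) 0)]
  rw [hsumf, hTfl, ← Finset.mul_sum]
  push_cast
  ring
end
end

section
/- Let n ≥ 2, 1 ≤ p < ∞ and m > −1. If g : ℂ^{n−1} → ℂ is holomorphic and ∫_{T_B} ρ(z)^m |g(z')|^p dV(z) < ∞, where z' = (z_1, …, z_{n−1}), then g ≡ 0 on ℂ^{n−1}. -/
open MeasureTheory Complex ComplexConjugate

noncomputable section

theorem stmt19 (d : ℕ) (hd : 0 < d) (p t : ℝ) (hp : 1 ≤ p) (ht : -1 < t)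
    (g : (Fin d → ℂ) → ℂ) (hg : Differentiable ℂ g)
    (hint : ∫⁻ z in TB d,
        ENNReal.ofReal (rho d z ^ t * ‖g fun k => z k.castSucc‖ ^ p) < ⊤) :
    ∀ w : Fin d → ℂ, g w = 0 := by
  intro w
  by_contra hw
  have hga : 0 < ‖g w‖ := norm_pos_iff.mpr hw
  set ε : ℝ := ‖g w‖ / 2 with hεdef
  have hε0 : 0 < ε := by positivity
  obtain ⟨r, hr0, hr⟩ := Metric.continuousAt_iff.mp (hg.continuous.continuousAt (x := w)) ε hε0
  have hglb : ∀ z' : Fin d → ℂ, z' ∈ Metric.ball w r → ε ≤ ‖g z'‖ := by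
    intro z' hz'
    have h2 : dist (g z') (g w) < ε := hr (Metric.mem_ball.mp hz')
    rw [Complex.dist_eq] at h2
    have h3 : ‖g w‖ - ‖g z'‖ ≤ ‖g w - g z'‖ := by
      simpa using norm_sub_norm_le (g w) (g z')
    rw [show g w - g z' = -(g z' - g w) by ring, norm_neg] at h3
    rw [hεdef] at h2 ⊢
    linarith
  set C : ℝ := ∑ k : Fin d, (|(w k).im| + r) ^ 2 with hC
  have hC0 : 0 ≤ C := Finset.sum_nonneg (fun k _ => sq_nonneg _)
  set A : Set ℂ := Complex.im ⁻¹' Set.Ioo (C + 1) (C + 2) with hA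
  set S : Set (Fin (d + 1) → ℂ) := Set.univ.pi
    (fun j => if h : j = Fin.last d then A else Metric.ball (w (j.castPred h)) r) with hS
  have hmem : ∀ z ∈ S, (∀ k : Fin d, z k.castSucc ∈ Metric.ball (w k) r)
      ∧ (z (Fin.last d)).im ∈ Set.Ioo (C + 1) (C + 2) := by
    intro z hz
    rw [hS, Set.mem_univ_pi] at hz
    constructor
    · intro k
      have := hz k.castSucc
      rwa [dif_neg (Fin.castSucc_lt_last k).ne, Fin.castPred_castSucc] at this
    · have := hz (Fin.last d)
      rwa [dif_pos rfl] at this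
  have hsumle : ∀ z ∈ S, ∑ k : Fin d, (z k.castSucc).im ^ 2 ≤ C := by
    intro z hz
    refine Finset.sum_le_sum (fun k _ => ?_)
    have hball := (hmem z hz).1 k
    rw [Metric.mem_ball, Complex.dist_eq] at hball
    have h1 : |(z k.castSucc - w k).im| ≤ ‖z k.castSucc - w k‖ :=
      Complex.abs_im_le_norm _
    have h2 : |(z k.castSucc).im| ≤ |(w k).im| + r := by
      have := abs_add_le ((w k).im) ((z k.castSucc - w k).im)
      simp only [Complex.sub_im] at this h1
      calc |(z k.castSucc).im| = |(w k).im + ((z k.castSucc).im - (w k).im)| := by ring_nf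
        _ ≤ |(w k).im| + |(z k.castSucc).im - (w k).im| := this
        _ ≤ |(w k).im| + r := by linarith
    nlinarith [abs_nonneg ((z k.castSucc).im), _root_.sq_abs ((z k.castSucc).im),
      abs_nonneg ((w k).im)]
  have hsum0 : ∀ z : Fin (d + 1) → ℂ, 0 ≤ ∑ k : Fin d, (z k.castSucc).im ^ 2 :=
    fun z => Finset.sum_nonneg (fun k _ => sq_nonneg _)
  have hSsub : S ⊆ TB d := by
    intro z hz
    have h1 := hsumle z hz
    have h2 := (hmem z hz).2.1
    show ∑ k : Fin d, (z k.castSucc).im ^ 2 < (z (Fin.last d)).im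
    linarith
  have hrho1 : ∀ z ∈ S, 1 ≤ rho d z := by
    intro z hz
    have h1 := hsumle z hz
    have h2 := (hmem z hz).2.1
    simp only [rho]
    linarith
  have hrho2 : ∀ z ∈ S, rho d z ≤ C + 2 := by
    intro z hz
    have h1 := hsum0 z
    have h2 := (hmem z hz).2.2
    simp only [rho]
    linarith
  set δ : ℝ := min 1 ((C + 2) ^ t) with hδ
  have hδ0 : 0 < δ := lt_min one_pos (Real.rpow_pos_of_pos (by linarith) t)
  have hrhot : ∀ z ∈ S, δ ≤ rho d z ^ t := by
    intro z hz
    rcases le_or_gt 0 t with htt | htt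
    · exact le_trans (min_le_left _ _) (Real.one_le_rpow (hrho1 z hz) htt)
    · exact le_trans (min_le_right _ _)
        (Real.rpow_le_rpow_of_nonpos (by linarith [hrho1 z hz]) (hrho2 z hz) htt.le)
  have hkey : ∀ z ∈ S, δ * ε ^ p ≤ rho d z ^ t * ‖g fun k => z k.castSucc‖ ^ p := by
    intro z hz
    have hball : (fun k : Fin d => z k.castSucc) ∈ Metric.ball w r := by
      rw [Metric.mem_ball, dist_pi_lt_iff hr0]
      intro k
      exact Metric.mem_ball.mp ((hmem z hz).1 k)
    have h1 : ε ^ p ≤ ‖g fun k => z k.castSucc‖ ^ p :=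
      Real.rpow_le_rpow hε0.le (hglb _ hball) (by linarith)
    exact mul_le_mul (hrhot z hz) h1 (Real.rpow_nonneg hε0.le p)
      (Real.rpow_nonneg (by linarith [hrho1 z hz]) t)
  have hSmeas : MeasurableSet S := by
    rw [hS]
    refine MeasurableSet.univ_pi (fun j => ?_)
    by_cases h : j = Fin.last d
    · rw [dif_pos h]; exact Complex.measurable_im measurableSet_Ioo
    · rw [dif_neg h]; exact measurableSet_ball
  have hA_top : volume A = ⊤ := by
    have heq : A = Complex.measurableEquivRealProd ⁻¹' (Set.univ ×ˢ Set.Ioo (C + 1) (C + 2)) := by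
      ext c
      simp [hA, Complex.measurableEquivRealProd, Complex.equivRealProd]
    rw [heq, Complex.volume_preserving_equiv_real_prod.measure_preimage
      (MeasurableSet.univ.prod measurableSet_Ioo).nullMeasurableSet]
    rw [MeasureTheory.Measure.volume_eq_prod, MeasureTheory.Measure.prod_prod,
      Real.volume_univ, Real.volume_Ioo]
    rw [ENNReal.top_mul]
    simp only [ne_eq, ENNReal.ofReal_eq_zero, not_le]
    linarith
  have hStop : volume S = ⊤ := by
    rw [hS, volume_pi_pi, Fin.prod_univ_castSucc]
    have h1 : ∀ k : Fin d,
        (if h : (k.castSucc : Fin (d + 1)) = Fin.last d then A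
          else Metric.ball (w (k.castSucc.castPred h)) r) = Metric.ball (w k) r := by
      intro k
      rw [dif_neg (Fin.castSucc_lt_last k).ne, Fin.castPred_castSucc]
    simp only [h1, dif_pos rfl, dite_true, hA_top]
    rw [ENNReal.mul_top]
    refine (CanonicallyOrderedAdd.prod_pos.mpr ?_).ne'
    intro k _
    exact Metric.measure_ball_pos volume _ hr0
  have hne0 : ENNReal.ofReal (δ * ε ^ p) ≠ 0 := by
    rw [ne_eq, ENNReal.ofReal_eq_zero, not_le]
    exact mul_pos hδ0 (Real.rpow_pos_of_pos hε0 p)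
  have hlower : (⊤ : ENNReal) ≤ ∫⁻ z in TB d,
      ENNReal.ofReal (rho d z ^ t * ‖g fun k => z k.castSucc‖ ^ p) := by
    calc (⊤ : ENNReal) = ENNReal.ofReal (δ * ε ^ p) * volume S := by
          rw [hStop, ENNReal.mul_top hne0]
      _ = ∫⁻ _ in S, ENNReal.ofReal (δ * ε ^ p) := (setLIntegral_const S _).symm
      _ ≤ ∫⁻ z in S,
            ENNReal.ofReal (rho d z ^ t * ‖g fun k => z k.castSucc‖ ^ p) :=
          setLIntegral_mono' hSmeas (fun z hz => ENNReal.ofReal_le_ofReal (hkey z hz))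
      _ ≤ _ := lintegral_mono_set hSsub
  exact absurd hint (by simp [top_le_iff.mp hlower])
end
end
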